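/- arXiv:1202.2707 — 2 statements merged into one kernel-verified Lean document; each statement's English description precedes it below -/
import Mathlib

section
/- Let $\mu_0>0$, $L_G\ge0$, $\tau_0>0$, $\beta\in[0,1)$. Consider nonnegative numbers $d_k$ (for $k\ge l_0+1$) satisfying $d_k\le \frac{1}{(1+\mu_0\tau)^{(1-\beta)(k-l_0)}((k-l_0)\tau)^{\beta}}+L_G\tau\sum_{l=l_0+1}^{k-1}\frac{(1+L_G\tau)^{l-l_0}}{(1+\mu_0\tau)^{(1-\beta)(k-l)}((k-l)\tau)^\beta}$ for $0<\tau\le\tau_0$. Then there is $C>0$ (depending on $\mu_0,L_G,\tau_0,\beta$ only) with $d_k\le C(1+L_G\tau)^{k-l_0}\left(1+\frac{1}{(1+\mu_0\tau)^{(1-\beta)(k-l_0)}((k-l_0)\tau)^\beta}\right)$, using that $\tau\sum_{l=1}^{\infty}\frac{1}{(1+\mu_0\tau)^{(1-\beta)l}(l\tau)^\beta}\le C$ uniformly for $\tau\le\tau_0$. -/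
open Real Finset

lemma sumA (β : ℝ) (hβ0 : 0 ≤ β) (hβ1 : β < 1) (N : ℕ) :
    ∑ j ∈ Finset.Icc 1 N, ((j : ℝ)) ^ (-β) ≤ (N : ℝ) ^ (1 - β) / (1 - β) := by
  have hp0 : (0:ℝ) < 1 - β := by linarith
  induction N with
  | zero =>
    simp [Real.zero_rpow hp0.ne']
  | succ n ih =>
    rw [Finset.sum_Icc_succ_top (Nat.one_le_iff_ne_zero.mpr (Nat.succ_ne_zero n))]
    have hx0 : (0:ℝ) < (n:ℝ) + 1 := by positivity
    have step : ((n:ℝ) + 1) ^ (-β) ≤ (((n:ℝ) + 1) ^ (1-β) - (n:ℝ) ^ (1-β)) / (1 - β) := by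
      set x : ℝ := (n:ℝ) + 1 with hxdef
      have hx1 : (1:ℝ) ≤ x := by
        rw [hxdef]; linarith [Nat.cast_nonneg (α := ℝ) n]
      have hinv : 1/x ≤ 1 := by rw [div_le_one hx0]; exact hx1
      have hneg : -1/x = -(1/x) := by ring
      have hbern : (1 + (-1/x)) ^ (1-β) ≤ 1 + (1-β) * (-1/x) := by
        apply rpow_one_add_le_one_add_mul_self _ hp0.le (by linarith)
        rw [hneg]; linarith
      have hxm : (0:ℝ) ≤ 1 + (-1/x) := by rw [hneg]; linarith
      have hmul : (1 + (-1/x)) ^ (1-β) * x ^ (1-β) = (x - 1) ^ (1-β) := by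
        rw [← Real.mul_rpow hxm hx0.le]
        congr 1
        field_simp
        ring
      have hxpow : x ^ (1-β) / x = x ^ (-β) := by
        have h := Real.rpow_sub hx0 (1-β) 1
        rw [Real.rpow_one] at h
        rw [show -β = 1-β-1 by ring]
        exact h.symm
      have h2 : (x - 1) ^ (1-β) ≤ x ^ (1-β) - (1-β) * x ^ (-β) := by
        have hh := mul_le_mul_of_nonneg_right hbern (Real.rpow_nonneg hx0.le (1-β))
        rw [hmul] at hh
        calc (x-1)^(1-β) ≤ (1 + (1-β) * (-1/x)) * x ^ (1-β) := hh
          _ = x ^ (1-β) - (1-β) * (x ^ (1-β) / x) := by ring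
          _ = x ^ (1-β) - (1-β) * x ^ (-β) := by rw [hxpow]
      rw [le_div_iff₀ hp0]
      have hn : ((n:ℝ)) = x - 1 := by rw [hxdef]; ring
      rw [hn]
      nlinarith [h2]
    push_cast
    calc ∑ j ∈ Finset.Icc 1 n, ((j:ℝ)) ^ (-β) + ((n:ℝ)+1) ^ (-β)
        ≤ (n:ℝ)^(1-β)/(1-β) + (((n:ℝ)+1)^(1-β) - (n:ℝ)^(1-β))/(1-β) := add_le_add ih step
      _ = ((n:ℝ)+1)^(1-β)/(1-β) := by ring

lemma kernelSum (μ₀ τ₀ β : ℝ) (hμ₀ : 0 < μ₀) (hτ₀ : 0 < τ₀) (hβ0 : 0 ≤ β) (hβ1 : β < 1)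
    (τ : ℝ) (hτ : 0 < τ) (hττ₀ : τ ≤ τ₀)
    (hA : ∀ N : ℕ, ∑ j ∈ Finset.Icc 1 N, ((j : ℝ)) ^ (-β) ≤ (N : ℝ) ^ (1 - β) / (1 - β))
    (M : ℕ) :
    ∑ j ∈ Finset.Ioo 0 M, τ / ((1 + μ₀*τ) ^ ((1-β) * (j:ℝ)) * ((j:ℝ) * τ) ^ β)
      ≤ 1/(1-β) + (1 + μ₀*τ₀)^2 / ((1-β) * μ₀) := by
  classical
  have hp0 : (0:ℝ) < 1 - β := by linarith
  set a : ℝ := 1 + μ₀ * τ with hadef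
  have ha1 : (1:ℝ) < a := by rw [hadef]; nlinarith
  have ha0 : (0:ℝ) < a := by linarith
  rw [← Finset.sum_filter_add_sum_filter_not (Finset.Ioo 0 M) (fun j : ℕ => (j:ℝ) * τ ≤ 1)]
  apply add_le_add
  · -- small j part
    set N : ℕ := ⌊1/τ⌋₊ with hNdef
    have step1 : ∀ j ∈ (Finset.Ioo 0 M).filter (fun j : ℕ => (j:ℝ) * τ ≤ 1),
        τ / (a ^ ((1-β) * (j:ℝ)) * ((j:ℝ) * τ) ^ β) ≤ τ ^ (1-β) * (j:ℝ) ^ (-β) := by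
      intro j hj
      simp only [Finset.mem_filter, Finset.mem_Ioo] at hj
      obtain ⟨⟨hj0, _⟩, _⟩ := hj
      have hjR : (0:ℝ) < (j:ℝ) := by exact_mod_cast hj0
      have hone : (1:ℝ) ≤ a ^ ((1-β) * (j:ℝ)) :=
        Real.one_le_rpow ha1.le (by positivity)
      have hjt : (0:ℝ) < ((j:ℝ) * τ) ^ β := by positivity
      calc τ / (a ^ ((1-β) * (j:ℝ)) * ((j:ℝ) * τ) ^ β)
          ≤ τ / (1 * ((j:ℝ) * τ) ^ β) := by
            apply div_le_div_of_nonneg_left hτ.le (by positivity)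
            exact mul_le_mul_of_nonneg_right hone hjt.le
        _ = τ ^ (1-β) * (j:ℝ) ^ (-β) := by
            rw [one_mul, Real.mul_rpow hjR.le hτ.le,
              Real.rpow_neg hjR.le,
              show (1:ℝ) - β = 1 - β from rfl, Real.rpow_sub hτ, Real.rpow_one,
              div_mul_eq_div_div_swap, div_eq_mul_inv]
    calc ∑ j ∈ (Finset.Ioo 0 M).filter (fun j : ℕ => (j:ℝ) * τ ≤ 1),
          τ / (a ^ ((1-β) * (j:ℝ)) * ((j:ℝ) * τ) ^ β)
        ≤ ∑ j ∈ (Finset.Ioo 0 M).filter (fun j : ℕ => (j:ℝ) * τ ≤ 1),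
            τ ^ (1-β) * (j:ℝ) ^ (-β) := Finset.sum_le_sum step1
      _ ≤ ∑ j ∈ Finset.Icc 1 N, τ ^ (1-β) * (j:ℝ) ^ (-β) := by
          apply Finset.sum_le_sum_of_subset_of_nonneg
          · intro j hj
            simp only [Finset.mem_filter, Finset.mem_Ioo] at hj
            obtain ⟨⟨hj0, _⟩, hj1⟩ := hj
            simp only [Finset.mem_Icc]
            refine ⟨hj0, Nat.le_floor ?_⟩
            rw [le_div_iff₀ hτ]
            simpa using hj1
          · intro j _ _
            positivity
      _ = τ ^ (1-β) * ∑ j ∈ Finset.Icc 1 N, (j:ℝ) ^ (-β) := by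
          rw [Finset.mul_sum]
      _ ≤ τ ^ (1-β) * ((N:ℝ) ^ (1-β) / (1-β)) := by
          apply mul_le_mul_of_nonneg_left (hA N) (by positivity)
      _ ≤ 1/(1-β) := by
          rw [mul_div_assoc', div_le_div_iff_of_pos_right hp0, ← Real.mul_rpow hτ.le (Nat.cast_nonneg N)]
          have h1 : τ * (N:ℝ) ≤ 1 := by
            have := Nat.floor_le (by positivity : (0:ℝ) ≤ 1/τ)
            rw [hNdef]
            calc τ * (⌊1/τ⌋₊ : ℝ) ≤ τ * (1/τ) := by
                  apply mul_le_mul_of_nonneg_left this hτ.le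
              _ = 1 := by field_simp
          calc (τ * (N:ℝ)) ^ (1-β) ≤ 1 := Real.rpow_le_one (by positivity) h1 hp0.le
            _ = 1 := rfl
  · -- large j part
    set b : ℝ := a ^ (1-β) with hbdef
    have hb1 : (1:ℝ) < b := Real.one_lt_rpow_iff_of_pos ha0 |>.mpr (Or.inl ⟨ha1, hp0⟩)
    have hb0 : (0:ℝ) < b := by linarith
    set c : ℝ := b⁻¹ with hcdef
    have hc0 : (0:ℝ) ≤ c := by positivity
    have hc1 : c < 1 := by rw [hcdef]; exact inv_lt_one_of_one_lt₀ hb1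
    have step1 : ∀ j ∈ (Finset.Ioo 0 M).filter (fun j : ℕ => ¬ ((j:ℝ) * τ ≤ 1)),
        τ / (a ^ ((1-β) * (j:ℝ)) * ((j:ℝ) * τ) ^ β) ≤ τ * c ^ j := by
      intro j hj
      simp only [Finset.mem_filter, Finset.mem_Ioo, not_le] at hj
      obtain ⟨⟨hj0, _⟩, hj1⟩ := hj
      have hjR : (0:ℝ) < (j:ℝ) := by exact_mod_cast hj0
      have hpow : a ^ ((1-β) * (j:ℝ)) = b ^ j := by
        rw [hbdef, ← Real.rpow_natCast (a ^ (1-β)) j, ← Real.rpow_mul ha0.le]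
      have hjt1 : (1:ℝ) ≤ ((j:ℝ) * τ) ^ β :=
        Real.one_le_rpow hj1.le hβ0
      have hbj : (0:ℝ) < b ^ j := by positivity
      calc τ / (a ^ ((1-β) * (j:ℝ)) * ((j:ℝ) * τ) ^ β)
          ≤ τ / (b ^ j * 1) := by
            rw [hpow]
            apply div_le_div_of_nonneg_left hτ.le (by positivity)
            exact mul_le_mul_of_nonneg_left hjt1 hbj.le
        _ = τ * c ^ j := by
            rw [mul_one, hcdef, inv_pow, div_eq_mul_inv]
    calc ∑ j ∈ (Finset.Ioo 0 M).filter (fun j : ℕ => ¬ ((j:ℝ) * τ ≤ 1)),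
          τ / (a ^ ((1-β) * (j:ℝ)) * ((j:ℝ) * τ) ^ β)
        ≤ ∑ j ∈ (Finset.Ioo 0 M).filter (fun j : ℕ => ¬ ((j:ℝ) * τ ≤ 1)), τ * c ^ j :=
          Finset.sum_le_sum step1
      _ ≤ ∑ j ∈ Finset.range M, τ * c ^ j := by
          apply Finset.sum_le_sum_of_subset_of_nonneg
          · intro j hj
            simp only [Finset.mem_filter, Finset.mem_Ioo] at hj
            exact Finset.mem_range.mpr hj.1.2
          · intro j _ _
            positivity
      _ = τ * ∑ j ∈ Finset.Ico 0 M, c ^ j := by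
          rw [← Finset.mul_sum, Finset.range_eq_Ico]
      _ ≤ τ * (c ^ 0 / (1 - c)) := by
          apply mul_le_mul_of_nonneg_left (geom_sum_Ico_le_of_lt_one hc0 hc1) hτ.le
      _ = τ * b / (b - 1) := by
          rw [pow_zero, hcdef]
          rw [show (1:ℝ) - b⁻¹ = (b-1)/b by field_simp]
          field_simp
      _ ≤ (1 + μ₀*τ₀)^2 / ((1-β) * μ₀) := by
          have he0 : (0:ℝ) < a ^ β := Real.rpow_pos_of_pos ha0 β
          have he_le : a ^ β ≤ 1 + β * (μ₀ * τ) := by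
            have := rpow_one_add_le_one_add_mul_self
              (s := μ₀ * τ) (by nlinarith) hβ0 hβ1.le
            simpa [hadef] using this
          have hbe : b * a ^ β = a := by
            rw [hbdef, ← Real.rpow_add ha0]
            norm_num
          have hba : b ≤ a := by
            calc b = a ^ (1-β) := hbdef
              _ ≤ a ^ (1:ℝ) := Real.rpow_le_rpow_of_exponent_le ha1.le (by linarith)
              _ = a := Real.rpow_one a
          have haτ₀ : a ≤ 1 + μ₀ * τ₀ := by rw [hadef]; nlinarith
          have hq : (1-β) * μ₀ * τ / (1 + μ₀ * τ₀) ≤ b - 1 := by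
            rw [div_le_iff₀ (by positivity)]
            have h1 : (b - 1) * (a ^ β) ≥ (1-β) * (μ₀ * τ) := by nlinarith
            have h2 : a ^ β ≤ 1 + μ₀ * τ₀ := by nlinarith
            nlinarith
          have hq0 : (0:ℝ) < (1-β) * μ₀ * τ / (1 + μ₀ * τ₀) := by positivity
          calc τ * b / (b - 1)
              ≤ τ * (1 + μ₀ * τ₀) / ((1-β) * μ₀ * τ / (1 + μ₀ * τ₀)) := by
                apply div_le_div₀ (by positivity) (by nlinarith) hq0 hq
            _ = (1 + μ₀*τ₀)^2 / ((1-β) * μ₀) := by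
                field_simp


/-- Recursive bound behind the Malliavin derivative estimate: if nonnegative `d k`
(for `k > l₀`) satisfy
`d k ≤ (1+μ₀τ)^(-(1-β)(k-l₀)) ((k-l₀)τ)^(-β) + L_G τ ∑_{l=l₀+1}^{k-1} (1+L_Gτ)^(l-l₀) (1+μ₀τ)^(-(1-β)(k-l)) ((k-l)τ)^(-β)`,
then `d k ≤ C (1+L_Gτ)^(k-l₀) (1 + (1+μ₀τ)^(-(1-β)(k-l₀)) ((k-l₀)τ)^(-β))`
with `C` depending only on `μ₀, L_G, τ₀, β`. -/
theorem stmt15 (μ₀ L_G τ₀ β : ℝ) (hμ₀ : 0 < μ₀) (hL : 0 ≤ L_G) (hτ₀ : 0 < τ₀)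
    (hβ0 : 0 ≤ β) (hβ1 : β < 1) :
    ∃ C > 0, ∀ τ : ℝ, 0 < τ → τ ≤ τ₀ → ∀ l₀ : ℕ, ∀ d : ℕ → ℝ,
      (∀ k, l₀ < k → 0 ≤ d k) →
      (∀ k, l₀ < k → d k ≤
        1 / ((1 + μ₀ * τ) ^ ((1 - β) * ((k : ℝ) - l₀)) * (((k : ℝ) - l₀) * τ) ^ β) +
        L_G * τ * ∑ l ∈ Finset.Ioo l₀ k,
          (1 + L_G * τ) ^ ((l : ℕ) - l₀) /
            ((1 + μ₀ * τ) ^ ((1 - β) * ((k : ℝ) - l)) * (((k : ℝ) - l) * τ) ^ β)) →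
      ∀ k, l₀ < k → d k ≤
        C * (1 + L_G * τ) ^ ((k : ℕ) - l₀) *
          (1 + 1 / ((1 + μ₀ * τ) ^ ((1 - β) * ((k : ℝ) - l₀)) *
            (((k : ℝ) - l₀) * τ) ^ β)) := by
  have hp0 : (0:ℝ) < 1 - β := by linarith
  set C₀ : ℝ := 1/(1-β) + (1 + μ₀*τ₀)^2 / ((1-β) * μ₀) with hC₀def
  have hC₀ : 0 < C₀ := by positivity
  refine ⟨1 + L_G * C₀, by positivity, ?_⟩
  intro τ hτ hττ₀ l₀ d hd hrec k hk
  set a : ℝ := 1 + μ₀ * τ with hadef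
  have ha0 : (0:ℝ) < a := by rw [hadef]; nlinarith
  set P : ℝ := (1 + L_G * τ) ^ (k - l₀) with hPdef
  have hb1 : (1:ℝ) ≤ 1 + L_G * τ := by nlinarith
  have hP1 : (1:ℝ) ≤ P := one_le_pow₀ hb1
  have hklR : (0:ℝ) < (k:ℝ) - l₀ := by
    have : (l₀:ℝ) < k := by exact_mod_cast hk
    linarith
  set f : ℝ := 1 / (a ^ ((1-β) * ((k:ℝ) - l₀)) * (((k:ℝ) - l₀) * τ) ^ β) with hfdef
  have hf0 : 0 ≤ f := by
    rw [hfdef]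
    have h1 : (0:ℝ) < ((k:ℝ) - l₀) * τ := by positivity
    have h2 := Real.rpow_pos_of_pos ha0 ((1-β) * ((k:ℝ) - l₀))
    have h3 := Real.rpow_pos_of_pos h1 β
    positivity
  -- the recursion sum, bounded by P times the kernel sum
  have hsum : ∑ l ∈ Finset.Ioo l₀ k, (1 + L_G * τ) ^ (l - l₀) /
        (a ^ ((1-β) * ((k:ℝ) - l)) * (((k:ℝ) - l) * τ) ^ β)
      ≤ P * ∑ l ∈ Finset.Ioo l₀ k,
          1 / (a ^ ((1-β) * ((k:ℝ) - l)) * (((k:ℝ) - l) * τ) ^ β) := by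
    rw [Finset.mul_sum]
    apply Finset.sum_le_sum
    intro l hl
    rw [Finset.mem_Ioo] at hl
    have hklR' : (0:ℝ) < (k:ℝ) - l := by
      have : (l:ℝ) < k := by exact_mod_cast hl.2
      linarith
    have hD : (0:ℝ) < a ^ ((1-β) * ((k:ℝ) - l)) * (((k:ℝ) - l) * τ) ^ β := by
      have h1 : (0:ℝ) < ((k:ℝ) - l) * τ := by positivity
      have h2 := Real.rpow_pos_of_pos ha0 ((1-β) * ((k:ℝ) - l))
      have h3 := Real.rpow_pos_of_pos h1 β
      positivity
    rw [mul_one_div, div_le_div_iff_of_pos_right hD]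
    exact pow_le_pow_right₀ hb1 (Nat.sub_le_sub_right hl.2.le l₀)
  -- reindex and apply the kernel-sum bound
  have hre : ∑ l ∈ Finset.Ioo l₀ k,
        τ * (1 / (a ^ ((1-β) * ((k:ℝ) - l)) * (((k:ℝ) - l) * τ) ^ β))
      = ∑ j ∈ Finset.Ioo 0 (k - l₀), τ / (a ^ ((1-β) * (j:ℝ)) * ((j:ℝ) * τ) ^ β) := by
    apply Finset.sum_nbij' (fun l => k - l) (fun j => k - j)
    · intro l hl
      rw [Finset.mem_Ioo] at hl ⊢
      omega
    · intro j hj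
      rw [Finset.mem_Ioo] at hj ⊢
      omega
    · intro l hl
      rw [Finset.mem_Ioo] at hl
      omega
    · intro j hj
      rw [Finset.mem_Ioo] at hj
      omega
    · intro l hl
      rw [Finset.mem_Ioo] at hl
      have hcast : (((k - l : ℕ)) : ℝ) = (k:ℝ) - l := by
        rw [Nat.cast_sub hl.2.le]
      rw [hcast, mul_one_div]
  have hkernel : ∑ j ∈ Finset.Ioo 0 (k - l₀), τ / (a ^ ((1-β) * (j:ℝ)) * ((j:ℝ) * τ) ^ β) ≤ C₀ :=
    kernelSum μ₀ τ₀ β hμ₀ hτ₀ hβ0 hβ1 τ hτ hττ₀ (sumA β hβ0 hβ1) (k - l₀)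
  have hS1 : τ * ∑ l ∈ Finset.Ioo l₀ k,
        1 / (a ^ ((1-β) * ((k:ℝ) - l)) * (((k:ℝ) - l) * τ) ^ β) ≤ C₀ := by
    rw [Finset.mul_sum]
    rw [hre] at *
    exact hkernel
  have hS0 : 0 ≤ ∑ l ∈ Finset.Ioo l₀ k,
        1 / (a ^ ((1-β) * ((k:ℝ) - l)) * (((k:ℝ) - l) * τ) ^ β) := by
    apply Finset.sum_nonneg
    intro l hl
    rw [Finset.mem_Ioo] at hl
    have hklR' : (0:ℝ) < (k:ℝ) - l := by
      have : (l:ℝ) < k := by exact_mod_cast hl.2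
      linarith
    have h1 : (0:ℝ) < ((k:ℝ) - l) * τ := by positivity
    have h2 := Real.rpow_pos_of_pos ha0 ((1-β) * ((k:ℝ) - l))
    have h3 := Real.rpow_pos_of_pos h1 β
    positivity
  have hmain : d k ≤ f + L_G * (P * C₀) := by
    calc d k ≤ f + L_G * τ * ∑ l ∈ Finset.Ioo l₀ k, (1 + L_G * τ) ^ (l - l₀) /
          (a ^ ((1-β) * ((k:ℝ) - l)) * (((k:ℝ) - l) * τ) ^ β) := hrec k hk
      _ ≤ f + L_G * τ * (P * ∑ l ∈ Finset.Ioo l₀ k,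
            1 / (a ^ ((1-β) * ((k:ℝ) - l)) * (((k:ℝ) - l) * τ) ^ β)) := by
          have := mul_le_mul_of_nonneg_left hsum (by positivity : (0:ℝ) ≤ L_G * τ)
          linarith
      _ = f + L_G * P * (τ * ∑ l ∈ Finset.Ioo l₀ k,
            1 / (a ^ ((1-β) * ((k:ℝ) - l)) * (((k:ℝ) - l) * τ) ^ β)) := by ring
      _ ≤ f + L_G * P * C₀ := by
          have hLP : (0:ℝ) ≤ L_G * P := by positivity
          nlinarith [mul_le_mul_of_nonneg_left hS1 hLP]
      _ = f + L_G * (P * C₀) := by ring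
  calc d k ≤ f + L_G * (P * C₀) := hmain
    _ ≤ (1 + L_G * C₀) * P * (1 + f) := by
        have hPf : f ≤ P * f := le_mul_of_one_le_left hf0 hP1
        have h1 : (0:ℝ) ≤ L_G * C₀ := by positivity
        have h2 : (0:ℝ) ≤ L_G * C₀ * (P * f) := by positivity
        nlinarith
end

section
/- Let $\tilde\mu>0$, $\kappa\in(0,1/2)$, and $T=m\tau$ with $m\ge2$, $\tau>0$. Then $\sum_{k=1}^{m-1}\frac{1}{(k\tau)^{1-\kappa}}\int_{k\tau}^{(k+1)\tau}\left(1+\frac{1}{(T-t)^{1/2-\kappa}}\right)e^{-\tilde\mu(T-t)}dt\le C\,T^{-(1/2-2\kappa)}\int_0^1 s^{\kappa-1}(1-s)^{\kappa-1/2}ds + C'$, i.e. the sum is bounded by $C_\kappa(1+T^{-(1/2-2\kappa)})$ with constants independent of $m$ and $\tau$. -/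
open Real Finset intervalIntegral
open MeasureTheory

set_option maxHeartbeats 1000000

/-- Singular convolution estimate: for `μ̃ > 0` and `κ ∈ (0,1/2)` there is `C > 0`,
independent of `m` and `τ`, such that with `T = mτ`,
`∑_{k=1}^{m-1} (kτ)^(-(1-κ)) ∫_{kτ}^{(k+1)τ} (1 + (T-t)^(-(1/2-κ))) e^{-μ̃(T-t)} dt
  ≤ C (1 + T^(-(1/2-2κ)))`. -/
theorem stmt16 (μt κ : ℝ) (hμ : 0 < μt) (hκ0 : 0 < κ) (hκ : κ < 1 / 2) :
    ∃ C > 0, ∀ m : ℕ, 2 ≤ m → ∀ τ : ℝ, 0 < τ →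
      ∑ k ∈ Finset.Ico 1 m,
        ((k : ℝ) * τ) ^ (-(1 - κ)) *
          ∫ t in ((k : ℝ) * τ)..(((k : ℝ) + 1) * τ),
            (1 + ((m : ℝ) * τ - t) ^ (-(1 / 2 - κ))) * Real.exp (-μt * ((m : ℝ) * τ - t))
      ≤ C * (1 + ((m : ℝ) * τ) ^ (-(1 / 2 - 2 * κ))) := by
  refine ⟨2 * (2 + 1 / μt) * (2 * (1 / κ + 1 / (κ + 1 / 2))), by positivity, ?_⟩
  intro m hm τ hτ
  have hm2 : (2 : ℝ) ≤ (m : ℝ) := by exact_mod_cast hm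
  set T : ℝ := (m : ℝ) * τ with hTdef
  have h2τ : 2 * τ ≤ T := by rw [hTdef]; nlinarith
  have hT : 0 < T := by nlinarith
  set f : ℝ → ℝ := fun t => (1 + (T - t) ^ (-(1 / 2 - κ))) * Real.exp (-μt * (T - t))
    with hfdef
  set g : ℝ → ℝ := fun t => t ^ (-(1 - κ)) * f t with hgdef
  set h : ℝ → ℝ := fun t => t ^ (-(1 - κ)) * (T - t) ^ (-(1 / 2 - κ)) with hhdef
  have he1 : (-1 : ℝ) < -(1 - κ) := by linarith
  have he2 : (-1 : ℝ) < -(1 / 2 - κ) := by linarith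
  -- basic integrability facts
  have hrpow_int : ∀ a b : ℝ, IntervalIntegrable (fun t => t ^ (-(1 - κ))) volume a b :=
    fun a b => intervalIntegrable_rpow' he1
  have hsub_int : ∀ a b : ℝ,
      IntervalIntegrable (fun t => (T - t) ^ (-(1 / 2 - κ))) volume a b := by
    intro a b
    have := (intervalIntegrable_rpow' he2 (a := T - a) (b := T - b)).comp_sub_left T
    simp only [sub_sub_cancel] at this
    exact this
  have hf_int : ∀ a b : ℝ, IntervalIntegrable f volume a b := by
    intro a b
    have h1 : IntervalIntegrable (fun t => 1 + (T - t) ^ (-(1 / 2 - κ))) volume a b :=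
      (_root_.intervalIntegrable_const).add (hsub_int a b)
    have h2 : ContinuousOn (fun t => Real.exp (-μt * (T - t))) (Set.uIcc a b) :=
      (Real.continuous_exp.comp (by fun_prop)).continuousOn
    exact h1.mul_continuousOn h2
  have hrpow_cont : ∀ a b : ℝ, 0 < a → 0 < b →
      ContinuousOn (fun t : ℝ => t ^ (-(1 - κ))) (Set.uIcc a b) := by
    intro a b ha hb
    refine continuousOn_id.rpow_const fun x hx => Or.inl ?_
    rcases Set.mem_uIcc.mp hx with ⟨h1, _⟩ | ⟨h1, _⟩ <;>
      exact ne_of_gt (by simp only [id]; linarith)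
  have hg_int : ∀ a b : ℝ, 0 < a → 0 < b → IntervalIntegrable g volume a b := by
    intro a b ha hb
    exact (hf_int a b).continuousOn_mul (hrpow_cont a b ha hb)
  -- nonnegativity
  have hf_nonneg : ∀ t : ℝ, t ≤ T → 0 ≤ f t := by
    intro t ht
    have : (0 : ℝ) ≤ (T - t) ^ (-(1 / 2 - κ)) := Real.rpow_nonneg (by linarith) _
    have := Real.exp_pos (-μt * (T - t))
    simp only [hfdef]
    nlinarith
  have hg_nonneg : ∀ t : ℝ, 0 ≤ t → t ≤ T → 0 ≤ g t := by
    intro t ht0 ht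
    exact mul_nonneg (Real.rpow_nonneg ht0 _) (hf_nonneg t ht)
  -- Step 1: per-term bound
  have step1 : ∀ k ∈ Finset.Ico 1 m,
      ((k : ℝ) * τ) ^ (-(1 - κ)) *
        ∫ t in ((k : ℝ) * τ)..(((k : ℝ) + 1) * τ), f t
      ≤ 2 * ∫ t in ((k : ℝ) * τ)..(((k : ℝ) + 1) * τ), g t := by
    intro k hk
    obtain ⟨hk1, hkm⟩ := Finset.mem_Ico.mp hk
    have hk1' : (1 : ℝ) ≤ (k : ℝ) := by exact_mod_cast hk1
    have hkm' : (k : ℝ) + 1 ≤ (m : ℝ) := by exact_mod_cast hkm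
    have hkt : 0 < (k : ℝ) * τ := by nlinarith
    have hkt1 : 0 < ((k : ℝ) + 1) * τ := by nlinarith
    have hle : (k : ℝ) * τ ≤ ((k : ℝ) + 1) * τ := by nlinarith
    rw [← intervalIntegral.integral_const_mul, ← intervalIntegral.integral_const_mul]
    refine intervalIntegral.integral_mono_on hle ((hf_int _ _).const_mul _)
      ((hg_int _ _ hkt hkt1).const_mul 2) ?_
    intro t ht
    obtain ⟨ht1, ht2⟩ := ht
    have htT : t ≤ T := by
      have : ((k : ℝ) + 1) * τ ≤ T := by rw [hTdef]; nlinarith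
      linarith
    have hft : 0 ≤ f t := hf_nonneg t htT
    have htpos : 0 < t := lt_of_lt_of_le hkt ht1
    have ht2k : t ≤ 2 * ((k : ℝ) * τ) := by nlinarith
    have hkey : ((k : ℝ) * τ) ^ (-(1 - κ)) ≤ 2 * t ^ (-(1 - κ)) := by
      have hmono : (2 * ((k : ℝ) * τ)) ^ (-(1 - κ)) ≤ t ^ (-(1 - κ)) :=
        Real.rpow_le_rpow_of_nonpos htpos ht2k (by linarith)
      have hmul : (2 * ((k : ℝ) * τ)) ^ (-(1 - κ))
          = (2 : ℝ) ^ (-(1 - κ)) * ((k : ℝ) * τ) ^ (-(1 - κ)) :=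
        Real.mul_rpow (by norm_num) (le_of_lt hkt)
      have h2pow : (1 : ℝ) / 2 ≤ (2 : ℝ) ^ (-(1 - κ)) := by
        have := Real.rpow_le_rpow_of_exponent_le (x := 2) one_le_two
          (by linarith : (-1 : ℝ) ≤ -(1 - κ))
        rwa [Real.rpow_neg_one, (by norm_num : (2 : ℝ)⁻¹ = 1 / 2)] at this
      have hknn : (0 : ℝ) ≤ ((k : ℝ) * τ) ^ (-(1 - κ)) := Real.rpow_nonneg hkt.le _
      nlinarith
    calc ((k : ℝ) * τ) ^ (-(1 - κ)) * f t ≤ (2 * t ^ (-(1 - κ))) * f t :=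
          mul_le_mul_of_nonneg_right hkey hft
      _ = 2 * g t := by rw [hgdef]; ring
  -- Step 2: telescoping
  have step2 : ∑ k ∈ Finset.Ico 1 m, (2 * ∫ t in ((k : ℝ) * τ)..(((k : ℝ) + 1) * τ), g t)
      = 2 * ∫ t in τ..T, g t := by
    rw [← Finset.mul_sum]
    congr 1
    have hint : ∀ k ∈ Set.Ico 1 m,
        IntervalIntegrable g volume ((k : ℝ) * τ) ((((k + 1) : ℕ) : ℝ) * τ) := by
      intro k hk
      obtain ⟨hk1, _⟩ := hk
      have hk1' : (1 : ℝ) ≤ (k : ℝ) := by exact_mod_cast hk1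
      have he : ((((k + 1) : ℕ) : ℝ)) * τ = ((k : ℝ) + 1) * τ := by push_cast; ring
      rw [he]
      exact hg_int _ _ (by nlinarith) (by nlinarith)
    have key : ∑ k ∈ Finset.Ico 1 m, ∫ x in ((k : ℝ) * τ)..((((k + 1) : ℕ) : ℝ) * τ), g x
        = ∫ x in (((1 : ℕ) : ℝ) * τ)..(((m : ℕ) : ℝ) * τ), g x :=
      intervalIntegral.sum_integral_adjacent_intervals_Ico (μ := volume)
        (a := fun k : ℕ => (k : ℝ) * τ) (f := g) (m := 1) (n := m) (by omega) hint
    calc ∑ k ∈ Finset.Ico 1 m, ∫ t in ((k : ℝ) * τ)..(((k : ℝ) + 1) * τ), g t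
        = ∑ k ∈ Finset.Ico 1 m, ∫ x in ((k : ℝ) * τ)..((((k + 1) : ℕ) : ℝ) * τ), g x := by
          refine Finset.sum_congr rfl fun k hk => ?_
          congr 1
          push_cast
          ring
      _ = ∫ x in (((1 : ℕ) : ℝ) * τ)..(((m : ℕ) : ℝ) * τ), g x := key
      _ = ∫ t in τ..T, g t := by rw [hTdef]; norm_num
  -- Step 3: extend the integral to 0
  have hg_int0τ : IntervalIntegrable g volume 0 τ := by
    refine (hrpow_int 0 τ).mul_continuousOn ?_
    have huIcc : Set.uIcc (0 : ℝ) τ = Set.Icc 0 τ := Set.uIcc_of_le hτ.le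
    refine ContinuousOn.mul ?_ (Real.continuous_exp.comp (by fun_prop)).continuousOn
    refine continuousOn_const.add ?_
    refine (continuousOn_const.sub continuousOn_id).rpow_const fun x hx => Or.inl ?_
    rw [huIcc] at hx
    have : x ≤ τ := hx.2
    simp only [Pi.sub_apply, id]
    intro hcontra
    nlinarith [hcontra]
  have step3 : ∫ t in τ..T, g t ≤ ∫ t in (0 : ℝ)..T, g t := by
    have hadd := intervalIntegral.integral_add_adjacent_intervals hg_int0τ
      (hg_int τ T hτ hT)
    have hpos : 0 ≤ ∫ t in (0 : ℝ)..τ, g t := by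
      refine intervalIntegral.integral_nonneg hτ.le fun u hu => ?_
      exact hg_nonneg u hu.1 (by linarith [hu.2])
    linarith
  -- integrability of h
  have hT2 : 0 < T / 2 := by linarith
  have hh_int1 : IntervalIntegrable h volume 0 (T / 2) := by
    refine (hrpow_int 0 (T / 2)).mul_continuousOn ?_
    have huIcc : Set.uIcc (0 : ℝ) (T / 2) = Set.Icc 0 (T / 2) := Set.uIcc_of_le hT2.le
    refine (continuousOn_const.sub continuousOn_id).rpow_const fun x hx => Or.inl ?_
    rw [huIcc] at hx
    have : x ≤ T / 2 := hx.2
    simp only [Pi.sub_apply, id]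
    intro hcontra
    nlinarith [hcontra]
  have hh_int2 : IntervalIntegrable h volume (T / 2) T := by
    refine (hsub_int (T / 2) T).continuousOn_mul ?_
    exact hrpow_cont (T / 2) T hT2 hT
  have hh_int : IntervalIntegrable h volume 0 T := hh_int1.trans hh_int2
  have hg_int0T : IntervalIntegrable g volume 0 T := hg_int0τ.trans (hg_int τ T hτ hT)
  -- Step 4: bound g by (2 + 1/μt) * h
  have step4 : ∫ t in (0 : ℝ)..T, g t ≤ (2 + 1 / μt) * ∫ t in (0 : ℝ)..T, h t := by
    rw [← intervalIntegral.integral_const_mul]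
    rw [intervalIntegral.integral_of_le hT.le, intervalIntegral.integral_of_le hT.le,
      MeasureTheory.integral_Ioc_eq_integral_Ioo, MeasureTheory.integral_Ioc_eq_integral_Ioo]
    refine MeasureTheory.setIntegral_mono_on
      (hg_int0T.1.mono_set Set.Ioo_subset_Ioc_self)
      ((hh_int.const_mul _).1.mono_set Set.Ioo_subset_Ioc_self)
      measurableSet_Ioo ?_
    intro t ht
    obtain ⟨ht0, htT⟩ := ht
    set s : ℝ := T - t with hsdef
    have hs0 : 0 < s := by simp only [hsdef]; linarith
    have hsexp : Real.exp (-μt * s) ≤ 1 := by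
      rw [Real.exp_le_one_iff]
      nlinarith
    -- s^(1/2-κ) ≤ 1 + s
    have hs1 : s ^ (1 / 2 - κ) ≤ 1 + s := by
      rcases le_or_gt s 1 with hs | hs
      · have := Real.rpow_le_one hs0.le hs (by linarith : (0 : ℝ) ≤ 1 / 2 - κ)
        linarith
      · have h1 : s ^ (1 / 2 - κ) ≤ s ^ (1 : ℝ) :=
          Real.rpow_le_rpow_of_exponent_le hs.le (by linarith)
        rw [Real.rpow_one] at h1
        linarith
    -- s * exp(-μt * s) ≤ 1/μt
    have hse : s * Real.exp (-μt * s) ≤ 1 / μt := by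
      have hE : μt * s ≤ Real.exp (μt * s) := by
        have := Real.add_one_le_exp (μt * s); linarith
      have hEpos := Real.exp_pos (μt * s)
      have hprod : Real.exp (μt * s) * Real.exp (-μt * s) = 1 := by
        rw [← Real.exp_add]; ring_nf; exact Real.exp_zero
      have hEinv : 0 < Real.exp (-μt * s) := Real.exp_pos _
      rw [le_div_iff₀ hμ]
      nlinarith
    -- exp(-μt*s) ≤ (1 + 1/μt) * s^(-(1/2-κ))
    have hexp_bound : Real.exp (-μt * s) ≤ (1 + 1 / μt) * s ^ (-(1 / 2 - κ)) := by
      have hcomb : s ^ (1 / 2 - κ) * Real.exp (-μt * s) ≤ 1 + 1 / μt := by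
        have h1 : s ^ (1 / 2 - κ) * Real.exp (-μt * s) ≤ (1 + s) * Real.exp (-μt * s) :=
          mul_le_mul_of_nonneg_right hs1 (Real.exp_pos _).le
        have h2 : (1 + s) * Real.exp (-μt * s)
            = Real.exp (-μt * s) + s * Real.exp (-μt * s) := by ring
        linarith
      have hcancel : s ^ (-(1 / 2 - κ)) * s ^ (1 / 2 - κ) = 1 := by
        rw [← Real.rpow_add hs0]; simp
      have hnn : (0 : ℝ) ≤ s ^ (-(1 / 2 - κ)) := Real.rpow_nonneg hs0.le _
      calc Real.exp (-μt * s)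
          = s ^ (-(1 / 2 - κ)) * (s ^ (1 / 2 - κ) * Real.exp (-μt * s)) := by
            rw [← mul_assoc, hcancel, one_mul]
        _ ≤ s ^ (-(1 / 2 - κ)) * (1 + 1 / μt) := mul_le_mul_of_nonneg_left hcomb hnn
        _ = (1 + 1 / μt) * s ^ (-(1 / 2 - κ)) := by ring
    -- f t ≤ (2 + 1/μt) * s^(-(1/2-κ))
    have hfb : f t ≤ (2 + 1 / μt) * s ^ (-(1 / 2 - κ)) := by
      have hsnn : (0 : ℝ) ≤ s ^ (-(1 / 2 - κ)) := Real.rpow_nonneg hs0.le _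
      have h2' : s ^ (-(1 / 2 - κ)) * Real.exp (-μt * s) ≤ s ^ (-(1 / 2 - κ)) := by
        nlinarith
      have : f t = Real.exp (-μt * s) + s ^ (-(1 / 2 - κ)) * Real.exp (-μt * s) := by
        simp only [hfdef, hsdef]; ring
      rw [this]
      nlinarith [hexp_bound]
    have htnn : (0 : ℝ) ≤ t ^ (-(1 - κ)) := Real.rpow_nonneg ht0.le _
    calc g t = t ^ (-(1 - κ)) * f t := rfl
      _ ≤ t ^ (-(1 - κ)) * ((2 + 1 / μt) * s ^ (-(1 / 2 - κ))) :=
          mul_le_mul_of_nonneg_left hfb htnn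
      _ = (2 + 1 / μt) * h t := by simp only [hhdef, hsdef]; ring
  -- Step 5: Beta-type bound
  have hI1 : ∫ t in (0 : ℝ)..(T / 2), (fun t : ℝ => t ^ (-(1 - κ))) t
      = (T / 2) ^ κ / κ := by
    have heq : -(1 - κ) + 1 = κ := by ring
    rw [integral_rpow (Or.inl he1), heq, Real.zero_rpow hκ0.ne', sub_zero]
  have hI2 : ∫ t in (T / 2)..T, (fun t : ℝ => (T - t) ^ (-(1 / 2 - κ))) t
      = (T / 2) ^ (κ + 1 / 2) / (κ + 1 / 2) := by
    have := intervalIntegral.integral_comp_sub_left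
      (fun s : ℝ => s ^ (-(1 / 2 - κ))) T (a := T / 2) (b := T)
    rw [this]
    have h0 : T - T = 0 := by ring
    have h1 : T - T / 2 = T / 2 := by ring
    have heq : -(1 / 2 - κ) + 1 = κ + 1 / 2 := by ring
    have hne : κ + 1 / 2 ≠ 0 := by positivity
    rw [h0, h1, integral_rpow (Or.inl he2), heq,
      Real.zero_rpow hne, sub_zero]
  have step5 : ∫ t in (0 : ℝ)..T, h t
      ≤ 2 * (1 / κ + 1 / (κ + 1 / 2)) * T ^ (-(1 / 2 - 2 * κ)) := by
    have hsplit : ∫ t in (0 : ℝ)..T, h t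
        = (∫ t in (0 : ℝ)..(T / 2), h t) + ∫ t in (T / 2)..T, h t :=
      (intervalIntegral.integral_add_adjacent_intervals hh_int1 hh_int2).symm
    have hA : ∫ t in (0 : ℝ)..(T / 2), h t
        ≤ (T / 2) ^ (-(1 / 2 - κ)) * ((T / 2) ^ κ / κ) := by
      have hmono : ∫ t in (0 : ℝ)..(T / 2), h t
          ≤ ∫ t in (0 : ℝ)..(T / 2), (T / 2) ^ (-(1 / 2 - κ)) * t ^ (-(1 - κ)) := by
        refine intervalIntegral.integral_mono_on hT2.le hh_int1
          ((hrpow_int 0 (T / 2)).const_mul _) ?_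
        intro t ht
        obtain ⟨ht0, ht2⟩ := ht
        have hb : (T - t) ^ (-(1 / 2 - κ)) ≤ (T / 2) ^ (-(1 / 2 - κ)) :=
          Real.rpow_le_rpow_of_nonpos hT2 (by linarith) (by linarith)
        have htnn : (0 : ℝ) ≤ t ^ (-(1 - κ)) := Real.rpow_nonneg ht0 _
        calc h t = t ^ (-(1 - κ)) * (T - t) ^ (-(1 / 2 - κ)) := rfl
          _ ≤ t ^ (-(1 - κ)) * (T / 2) ^ (-(1 / 2 - κ)) :=
              mul_le_mul_of_nonneg_left hb htnn
          _ = (T / 2) ^ (-(1 / 2 - κ)) * t ^ (-(1 - κ)) := by ring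
      rw [intervalIntegral.integral_const_mul] at hmono
      rw [hI1] at hmono
      exact hmono
    have hB : ∫ t in (T / 2)..T, h t
        ≤ (T / 2) ^ (-(1 - κ)) * ((T / 2) ^ (κ + 1 / 2) / (κ + 1 / 2)) := by
      have hmono : ∫ t in (T / 2)..T, h t
          ≤ ∫ t in (T / 2)..T, (T / 2) ^ (-(1 - κ)) * (T - t) ^ (-(1 / 2 - κ)) := by
        refine intervalIntegral.integral_mono_on (by linarith) hh_int2
          ((hsub_int (T / 2) T).const_mul _) ?_
        intro t ht
        obtain ⟨ht1, ht2⟩ := ht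
        have hb : t ^ (-(1 - κ)) ≤ (T / 2) ^ (-(1 - κ)) :=
          Real.rpow_le_rpow_of_nonpos hT2 ht1 (by linarith)
        have hsnn : (0 : ℝ) ≤ (T - t) ^ (-(1 / 2 - κ)) :=
          Real.rpow_nonneg (by linarith) _
        calc h t = t ^ (-(1 - κ)) * (T - t) ^ (-(1 / 2 - κ)) := rfl
          _ ≤ (T / 2) ^ (-(1 - κ)) * (T - t) ^ (-(1 / 2 - κ)) :=
              mul_le_mul_of_nonneg_right hb hsnn
      rw [intervalIntegral.integral_const_mul] at hmono
      rw [hI2] at hmono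
      exact hmono
    have hc1 : (T / 2) ^ (-(1 / 2 - κ)) * ((T / 2) ^ κ / κ)
        = (T / 2) ^ (-(1 / 2 - 2 * κ)) * (1 / κ) := by
      have e : (T / 2) ^ (-(1 / 2 - κ)) * (T / 2) ^ κ = (T / 2) ^ (-(1 / 2 - 2 * κ)) := by
        rw [← Real.rpow_add hT2]; congr 1; ring
      calc (T / 2) ^ (-(1 / 2 - κ)) * ((T / 2) ^ κ / κ)
          = ((T / 2) ^ (-(1 / 2 - κ)) * (T / 2) ^ κ) * (1 / κ) := by ring
        _ = (T / 2) ^ (-(1 / 2 - 2 * κ)) * (1 / κ) := by rw [e]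
    have hc2 : (T / 2) ^ (-(1 - κ)) * ((T / 2) ^ (κ + 1 / 2) / (κ + 1 / 2))
        = (T / 2) ^ (-(1 / 2 - 2 * κ)) * (1 / (κ + 1 / 2)) := by
      have e : (T / 2) ^ (-(1 - κ)) * (T / 2) ^ (κ + 1 / 2)
          = (T / 2) ^ (-(1 / 2 - 2 * κ)) := by
        rw [← Real.rpow_add hT2]; congr 1; ring
      calc (T / 2) ^ (-(1 - κ)) * ((T / 2) ^ (κ + 1 / 2) / (κ + 1 / 2))
          = ((T / 2) ^ (-(1 - κ)) * (T / 2) ^ (κ + 1 / 2)) * (1 / (κ + 1 / 2)) := by ring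
        _ = (T / 2) ^ (-(1 / 2 - 2 * κ)) * (1 / (κ + 1 / 2)) := by rw [e]
    have hhalf : (T / 2) ^ (-(1 / 2 - 2 * κ)) ≤ 2 * T ^ (-(1 / 2 - 2 * κ)) := by
      rw [Real.div_rpow hT.le (by norm_num : (0 : ℝ) ≤ 2), div_eq_mul_inv,
        ← Real.rpow_neg (by norm_num : (0 : ℝ) ≤ 2)]
      have h2b : (2 : ℝ) ^ (-(-(1 / 2 - 2 * κ))) ≤ 2 := by
        have := Real.rpow_le_rpow_of_exponent_le (x := 2) one_le_two
          (by linarith : -(-(1 / 2 - 2 * κ)) ≤ 1)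
        rwa [Real.rpow_one] at this
      have hTnn : (0 : ℝ) ≤ T ^ (-(1 / 2 - 2 * κ)) := Real.rpow_nonneg hT.le _
      nlinarith
    have hsumnn : (0 : ℝ) ≤ 1 / κ + 1 / (κ + 1 / 2) := by positivity
    have hTh : (0 : ℝ) ≤ (T / 2) ^ (-(1 / 2 - 2 * κ)) := Real.rpow_nonneg hT2.le _
    rw [hsplit]
    calc (∫ t in (0 : ℝ)..(T / 2), h t) + ∫ t in (T / 2)..T, h t
        ≤ (T / 2) ^ (-(1 / 2 - 2 * κ)) * (1 / κ)
          + (T / 2) ^ (-(1 / 2 - 2 * κ)) * (1 / (κ + 1 / 2)) := by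
          rw [← hc1, ← hc2]; exact add_le_add hA hB
      _ = (T / 2) ^ (-(1 / 2 - 2 * κ)) * (1 / κ + 1 / (κ + 1 / 2)) := by ring
      _ ≤ 2 * T ^ (-(1 / 2 - 2 * κ)) * (1 / κ + 1 / (κ + 1 / 2)) :=
          mul_le_mul_of_nonneg_right hhalf hsumnn
      _ = 2 * (1 / κ + 1 / (κ + 1 / 2)) * T ^ (-(1 / 2 - 2 * κ)) := by ring
  -- Assemble
  have hμ2 : (0 : ℝ) < 2 + 1 / μt := by positivity
  have hTnn : (0 : ℝ) ≤ T ^ (-(1 / 2 - 2 * κ)) := Real.rpow_nonneg hT.le _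
  calc ∑ k ∈ Finset.Ico 1 m,
        ((k : ℝ) * τ) ^ (-(1 - κ)) *
          ∫ t in ((k : ℝ) * τ)..(((k : ℝ) + 1) * τ), f t
      ≤ ∑ k ∈ Finset.Ico 1 m,
          (2 * ∫ t in ((k : ℝ) * τ)..(((k : ℝ) + 1) * τ), g t) :=
        Finset.sum_le_sum step1
    _ = 2 * ∫ t in τ..T, g t := step2
    _ ≤ 2 * ∫ t in (0 : ℝ)..T, g t := by linarith [step3]
    _ ≤ 2 * ((2 + 1 / μt) * ∫ t in (0 : ℝ)..T, h t) := by linarith [step4]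
    _ ≤ 2 * ((2 + 1 / μt) * (2 * (1 / κ + 1 / (κ + 1 / 2)) * T ^ (-(1 / 2 - 2 * κ)))) := by
        have := mul_le_mul_of_nonneg_left step5 hμ2.le
        linarith
    _ = 2 * (2 + 1 / μt) * (2 * (1 / κ + 1 / (κ + 1 / 2))) * T ^ (-(1 / 2 - 2 * κ)) := by
        ring
    _ ≤ 2 * (2 + 1 / μt) * (2 * (1 / κ + 1 / (κ + 1 / 2))) * (1 + T ^ (-(1 / 2 - 2 * κ))) := by
        have hC : (0 : ℝ) ≤ 2 * (2 + 1 / μt) * (2 * (1 / κ + 1 / (κ + 1 / 2))) := by positivity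
        nlinarith
end
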